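/- Let G be a connected unicyclic graph on n vertices (a connected graph containing exactly one cycle) whose unique cycle is a 3-cycle, with positive real edge weights. Then the distance matrix D(G) has exactly 1 positive eigenvalue and n−1 negative eigenvalues, i.e., its inertia is (1, 0, n−1); in particular D(G) is strongly unipositive. -/

import Mathlib

open Matrix

/-- Number of positive eigenvalues (with multiplicity) of a real symmetric matrix. -/
noncomputable def posEig {n : ℕ} {A : Matrix (Fin n) (Fin n) ℝ} (hA : A.IsHermitian) : ℕ :=
  Nat.card {i : Fin n // 0 < hA.eigenvalues i}

noncomputable def zeroEig {n : ℕ} {A : Matrix (Fin n) (Fin n) ℝ} (hA : A.IsHermitian) : ℕ :=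
  Nat.card {i : Fin n // hA.eigenvalues i = 0}

noncomputable def negEig {n : ℕ} {A : Matrix (Fin n) (Fin n) ℝ} (hA : A.IsHermitian) : ℕ :=
  Nat.card {i : Fin n // hA.eigenvalues i < 0}

/-- Total weight of a walk: sum of weights of its edges. -/
noncomputable def walkWeight {V : Type*} {G : SimpleGraph V} (w : Sym2 V → ℝ)
    {u v : V} (p : G.Walk u v) : ℝ :=
  (p.edges.map w).sum

/-- Weighted shortest-path distance. -/
noncomputable def wdist {V : Type*} (G : SimpleGraph V) (w : Sym2 V → ℝ) (u v : V) : ℝ :=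
  sInf {x | ∃ p : G.Walk u v, walkWeight w p = x}

/-- The distance matrix of a weighted graph on `Fin n`. -/
noncomputable def distMatrix {n : ℕ} (G : SimpleGraph (Fin n)) (w : Sym2 (Fin n) → ℝ) :
    Matrix (Fin n) (Fin n) ℝ :=
  Matrix.of fun i j => wdist G w i j

namespace AuxUni

variable {V : Type*} {G : SimpleGraph V} {w : Sym2 V → ℝ}

lemma walkWeight_nil {u : V} : walkWeight w (SimpleGraph.Walk.nil : G.Walk u u) = 0 := rfl

lemma walkWeight_cons {u x y : V} (h : G.Adj u x) (p : G.Walk x y) :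
    walkWeight w (SimpleGraph.Walk.cons h p) = w s(u, x) + walkWeight w p := by
  simp [walkWeight]

lemma walkWeight_append {u x y : V} (p : G.Walk u x) (q : G.Walk x y) :
    walkWeight w (p.append q) = walkWeight w p + walkWeight w q := by
  simp [walkWeight]

lemma walkWeight_reverse {u x : V} (p : G.Walk u x) :
    walkWeight w p.reverse = walkWeight w p := by
  simp [walkWeight, List.sum_reverse]

lemma walkWeight_nonneg (hw : ∀ e ∈ G.edgeSet, 0 < w e) {u v : V} (p : G.Walk u v) :
    0 ≤ walkWeight w p := by
  refine List.sum_nonneg ?_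
  intro x hx
  obtain ⟨e, he, rfl⟩ := List.mem_map.1 hx
  exact (hw e (p.edges_subset_edgeSet he)).le

lemma wdist_bddBelow (hw : ∀ e ∈ G.edgeSet, 0 < w e) (u v : V) :
    BddBelow {x | ∃ p : G.Walk u v, walkWeight w p = x} :=
  ⟨0, by rintro x ⟨p, rfl⟩; exact walkWeight_nonneg hw p⟩

lemma wdist_le (hw : ∀ e ∈ G.edgeSet, 0 < w e) {u v : V} (p : G.Walk u v) :
    wdist G w u v ≤ walkWeight w p :=
  csInf_le (wdist_bddBelow hw u v) ⟨p, rfl⟩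

lemma le_wdist {u v : V} (h : G.Reachable u v) (c : ℝ)
    (hc : ∀ p : G.Walk u v, c ≤ walkWeight w p) : c ≤ wdist G w u v := by
  refine le_csInf ?_ ?_
  · obtain ⟨p⟩ := h; exact ⟨_, p, rfl⟩
  · rintro x ⟨p, rfl⟩; exact hc p

lemma wdist_nonneg (hw : ∀ e ∈ G.edgeSet, 0 < w e) {u v : V} (h : G.Reachable u v) :
    0 ≤ wdist G w u v :=
  le_wdist h 0 fun p => walkWeight_nonneg hw p

lemma wdist_self (hw : ∀ e ∈ G.edgeSet, 0 < w e) (u : V) : wdist G w u u = 0 :=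
  le_antisymm (wdist_le hw SimpleGraph.Walk.nil) (wdist_nonneg hw (SimpleGraph.Reachable.refl u))

lemma wdist_symm (u v : V) : wdist G w u v = wdist G w v u := by
  unfold wdist
  congr 1
  ext x
  constructor
  · rintro ⟨p, rfl⟩; exact ⟨p.reverse, walkWeight_reverse p⟩
  · rintro ⟨p, rfl⟩; exact ⟨p.reverse, walkWeight_reverse p⟩

lemma wdist_triangle (hw : ∀ e ∈ G.edgeSet, 0 < w e) {u x y : V}
    (h1 : G.Reachable u x) (h2 : G.Reachable x y) :
    wdist G w u y ≤ wdist G w u x + wdist G w x y := by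
  have key : ∀ p : G.Walk u x, wdist G w u y - wdist G w x y ≤ walkWeight w p := by
    intro p
    rw [sub_le_iff_le_add, add_comm]
    have key2 : ∀ q : G.Walk x y, wdist G w u y - walkWeight w p ≤ walkWeight w q := by
      intro q
      rw [sub_le_iff_le_add]
      calc wdist G w u y ≤ walkWeight w (p.append q) := wdist_le hw _
        _ = walkWeight w q + walkWeight w p := by rw [walkWeight_append]; ring
    have := le_wdist h2 _ key2
    linarith
  have := le_wdist h1 _ key
  linarith

lemma wdist_le_edge (hw : ∀ e ∈ G.edgeSet, 0 < w e) {u v : V} (h : G.Adj u v) :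
    wdist G w u v ≤ w s(u, v) := by
  have := wdist_le hw (SimpleGraph.Walk.cons h SimpleGraph.Walk.nil)
  simpa [walkWeight_cons, walkWeight_nil] using this

lemma wdist_pos [Fintype V] [DecidableEq V] (hw : ∀ e ∈ G.edgeSet, 0 < w e)
    {u v : V} (h : G.Reachable u v) (hne : u ≠ v) : 0 < wdist G w u v := by
  classical
  have hE : G.edgeFinset.Nonempty := by
    obtain ⟨p⟩ := h
    cases p with
    | nil => exact absurd rfl hne
    | cons h' q => exact ⟨_, SimpleGraph.mem_edgeFinset.2 ((SimpleGraph.mem_edgeSet G).mpr h')⟩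
  set m := G.edgeFinset.inf' hE w with hm
  have hmpos : 0 < m := by
    rw [hm, Finset.lt_inf'_iff]
    intro e he
    exact hw e (SimpleGraph.mem_edgeFinset.1 he)
  refine lt_of_lt_of_le hmpos (le_wdist h m ?_)
  intro p
  cases p with
  | nil => exact absurd rfl hne
  | cons h' q =>
    rw [walkWeight_cons]
    have h1 : m ≤ w s(u, _) := Finset.inf'_le _ (SimpleGraph.mem_edgeFinset.2
      ((SimpleGraph.mem_edgeSet G).mpr h'))
    have h2 : 0 ≤ walkWeight w q := walkWeight_nonneg hw q
    linarith

/-- The induced graph on the complement of `v`. -/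
abbrev Gdel (G : SimpleGraph V) (v : V) : SimpleGraph {x : V // x ≠ v} :=
  G.comap (Subtype.val)

abbrev wdel (w : Sym2 V → ℝ) (v : V) : Sym2 {x : V // x ≠ v} → ℝ :=
  fun e => w (Sym2.map Subtype.val e)

def iotaHom (G : SimpleGraph V) (v : V) : Gdel G v →g G :=
  ⟨Subtype.val, fun h => h⟩

lemma walkWeight_iota (v : V) {x y : {a : V // a ≠ v}} (p : (Gdel G v).Walk x y) :
    walkWeight w (p.map (iotaHom G v)) = walkWeight (wdel w v) p := by
  unfold walkWeight
  rw [SimpleGraph.Walk.edges_map, List.map_map]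
  rfl

/-- Removing a pendant vertex: any walk avoiding `v` at its endpoints can be replaced by a
walk in the deleted graph of no greater weight. -/
lemma detour (hw : ∀ e ∈ G.edgeSet, 0 < w e) {v u : V} (hu : G.Adj u v)
    (hleaf : ∀ z, G.Adj v z → z = u) :
    ∀ (N : ℕ) {x y : V} (hx : x ≠ v) (hy : y ≠ v) (p : G.Walk x y), p.length ≤ N →
    ∃ q : (Gdel G v).Walk ⟨x, hx⟩ ⟨y, hy⟩, walkWeight (wdel w v) q ≤ walkWeight w p := by
  intro N
  induction N with
  | zero =>
    intro x y hx hy p hlen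
    cases p with
    | nil => exact ⟨SimpleGraph.Walk.nil, by rw [walkWeight_nil, walkWeight_nil]⟩
    | cons h q => simp at hlen
  | succ N ih =>
    intro x y hx hy p hlen
    cases p with
    | nil => exact ⟨SimpleGraph.Walk.nil, by rw [walkWeight_nil, walkWeight_nil]⟩
    | @cons _ z _ h q =>
      by_cases hz : z = v
      · subst hz
        have hxu : x = u := hleaf x h.symm
        cases q with
        | nil => exact absurd rfl hy
        | @cons _ z2 _ h2 q2 =>
          have hz2 : z2 = u := hleaf z2 h2
          have hxz2 : x = z2 := by rw [hxu, hz2]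
          subst hxz2
          have hlen2 : q2.length ≤ N := by
            simp only [SimpleGraph.Walk.length_cons] at hlen; omega
          obtain ⟨q', hq'⟩ := ih hx hy q2 hlen2
          refine ⟨q', le_trans hq' ?_⟩
          rw [walkWeight_cons, walkWeight_cons]
          have w1 := hw _ ((SimpleGraph.mem_edgeSet G).mpr h)
          have w2 := hw _ ((SimpleGraph.mem_edgeSet G).mpr h2)
          linarith
      · have hlen2 : q.length ≤ N := by
          simp only [SimpleGraph.Walk.length_cons] at hlen; omega
        obtain ⟨q', hq'⟩ := ih hz hy q hlen2
        refine ⟨SimpleGraph.Walk.cons (by exact h : (Gdel G v).Adj ⟨x, hx⟩ ⟨z, hz⟩) q', ?_⟩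
        rw [walkWeight_cons (G := Gdel G v) (by exact h) q', walkWeight_cons]
        have : wdel w v s(⟨x, hx⟩, ⟨z, hz⟩) = w s(x, z) := rfl
        rw [this]
        linarith

lemma hw_del (hw : ∀ e ∈ G.edgeSet, 0 < w e) {v : V} :
    ∀ e ∈ (Gdel G v).edgeSet, 0 < wdel w v e := by
  intro e he
  induction e with
  | _ x y => exact hw _ ((SimpleGraph.mem_edgeSet G).mpr he)

lemma reachable_del (hw : ∀ e ∈ G.edgeSet, 0 < w e) {v u : V} (hu : G.Adj u v)
    (hleaf : ∀ z, G.Adj v z → z = u) (hc : G.Connected) (x y : {a : V // a ≠ v}) :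
    (Gdel G v).Reachable x y := by
  obtain ⟨p⟩ := hc.preconnected x.1 y.1
  obtain ⟨q, -⟩ := detour hw hu hleaf p.length x.2 y.2 p le_rfl
  exact ⟨q⟩

lemma connected_del (hw : ∀ e ∈ G.edgeSet, 0 < w e) {v u : V} (hu : G.Adj u v)
    (hleaf : ∀ z, G.Adj v z → z = u) (hc : G.Connected) : (Gdel G v).Connected := by
  have hne : u ≠ v := hu.ne
  rw [SimpleGraph.connected_iff]
  exact ⟨fun x y => reachable_del hw hu hleaf hc x y, ⟨⟨u, hne⟩⟩⟩

lemma wdist_del_eq (hw : ∀ e ∈ G.edgeSet, 0 < w e) {v u : V} (hu : G.Adj u v)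
    (hleaf : ∀ z, G.Adj v z → z = u) (hc : G.Connected) (x y : {a : V // a ≠ v}) :
    wdist (Gdel G v) (wdel w v) x y = wdist G w x.1 y.1 := by
  refine le_antisymm ?_ ?_
  · refine le_wdist (hc.preconnected x.1 y.1) _ ?_
    intro p
    obtain ⟨q, hq⟩ := detour hw hu hleaf p.length x.2 y.2 p le_rfl
    exact le_trans (wdist_le (hw_del hw) q) hq
  · refine le_wdist (reachable_del hw hu hleaf hc x y) _ ?_
    intro q
    rw [← walkWeight_iota (w := w) v q]
    exact wdist_le hw _

lemma wdist_pendant (hw : ∀ e ∈ G.edgeSet, 0 < w e) {v u : V} (hu : G.Adj u v)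
    (hleaf : ∀ z, G.Adj v z → z = u) (hc : G.Connected) {y : V} (hy : y ≠ v) :
    wdist G w v y = w s(u, v) + wdist G w u y := by
  refine le_antisymm ?_ ?_
  · calc wdist G w v y ≤ wdist G w v u + wdist G w u y :=
          wdist_triangle hw (hc.preconnected v u) (hc.preconnected u y)
      _ ≤ w s(u, v) + wdist G w u y := by
          have := wdist_le_edge hw hu.symm
          rw [Sym2.eq_swap] at this
          linarith
  · refine le_wdist (hc.preconnected v y) _ ?_
    intro p
    cases p with
    | nil => exact absurd rfl hy.symm
    | @cons _ z _ h q =>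
      have hz : z = u := hleaf z h
      rw [walkWeight_cons]
      have h1 : wdist G w z y ≤ walkWeight w q := wdist_le hw q
      have h1' : wdist G w u y ≤ walkWeight w q := by rw [← hz]; exact h1
      have h2 : w s(v, z) = w s(u, v) := by rw [hz, Sym2.eq_swap]
      linarith

lemma edge_count_del [Fintype V] {v u : V} (hu : G.Adj u v)
    (hleaf : ∀ z, G.Adj v z → z = u) : (Gdel G v).edgeSet.ncard + 1 ≤ G.edgeSet.ncard := by
  classical
  have hinj : Function.Injective (Sym2.map (Subtype.val : {x : V // x ≠ v} → V)) :=
    Sym2.map.injective Subtype.val_injective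
  have himg : Sym2.map (Subtype.val : {x : V // x ≠ v} → V) '' (Gdel G v).edgeSet
      ⊆ G.edgeSet \ {s(u, v)} := by
    rintro e ⟨e', he', rfl⟩
    induction e' with
    | _ x y =>
      refine ⟨(SimpleGraph.mem_edgeSet G).mpr he', ?_⟩
      intro hmem
      simp only [Set.mem_singleton_iff, Sym2.map_pair_eq] at hmem
      have : v ∈ s((x : V), (y : V)) := by rw [hmem]; exact Sym2.mem_mk_right u v
      rw [Sym2.mem_iff] at this
      rcases this with h | h
      · exact x.2 h.symm
      · exact y.2 h.symm
  have h1 : (Gdel G v).edgeSet.ncard = (Sym2.map (Subtype.val : {x : V // x ≠ v} → V) ''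
      (Gdel G v).edgeSet).ncard := (Set.ncard_image_of_injective _ hinj).symm
  have h2 : (Sym2.map (Subtype.val : {x : V // x ≠ v} → V) '' (Gdel G v).edgeSet).ncard
      ≤ (G.edgeSet \ {s(u, v)}).ncard := Set.ncard_le_ncard himg (Set.toFinite _)
  have h3 : (G.edgeSet \ {s(u, v)}).ncard = G.edgeSet.ncard - 1 :=
    Set.ncard_diff_singleton_of_mem ((SimpleGraph.mem_edgeSet G).mpr hu)
  have h4 : 0 < G.edgeSet.ncard := by
    rw [Set.ncard_pos (Set.toFinite _)]
    exact ⟨_, (SimpleGraph.mem_edgeSet G).mpr hu⟩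
  omega

lemma exists_leaf [Fintype V] [DecidableEq V] (hconn : G.Connected)
    (hcard : G.edgeSet.ncard ≤ Fintype.card V)
    {a b c : V} (hab : G.Adj a b) (hbc : G.Adj b c) (hac : G.Adj a c) :
    (∀ x : V, x = a ∨ x = b ∨ x = c) ∨
    ∃ v u, G.Adj u v ∧ (∀ z, G.Adj v z → z = u) ∧ v ≠ a ∧ v ≠ b ∧ v ≠ c := by
  classical
  by_cases hdeg : ∃ v, G.degree v ≤ 1
  · right
    obtain ⟨v, hv⟩ := hdeg
    have hne : ∃ t : V, t ≠ v := by
      by_cases h : v = a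
      · exact ⟨b, by rw [h]; exact hab.ne.symm⟩
      · exact ⟨a, fun hh => h hh.symm⟩
    obtain ⟨t, htne⟩ := hne
    obtain ⟨p⟩ := hconn.preconnected v t
    obtain ⟨u, hadj⟩ : ∃ u, G.Adj v u := by
      cases p with
      | nil => exact absurd rfl htne
      | cons h q => exact ⟨_, h⟩
    have hleaf : ∀ z, G.Adj v z → z = u := by
      intro z hz
      have h1 : z ∈ G.neighborFinset v := (SimpleGraph.mem_neighborFinset G v z).2 hz
      have h2 : u ∈ G.neighborFinset v := (SimpleGraph.mem_neighborFinset G v u).2 hadj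
      exact Finset.card_le_one.1 hv _ h1 _ h2
    have key : ∀ {s t : V}, G.Adj v s → G.Adj v t → s = t := fun h1 h2 =>
      (hleaf _ h1).trans (hleaf _ h2).symm
    refine ⟨v, u, hadj.symm, hleaf, ?_, ?_, ?_⟩
    · rintro rfl; exact hbc.ne (key hab hac)
    · rintro rfl; exact hac.ne (key hab.symm hbc)
    · rintro rfl; exact hab.ne (key hac.symm hbc.symm)
  · left
    push_neg at hdeg
    have hdeg2 : ∀ v, 2 ≤ G.degree v := hdeg
    have hsum : ∑ v, G.degree v = 2 * G.edgeFinset.card :=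
      SimpleGraph.sum_degrees_eq_twice_card_edges G
    have hec : G.edgeFinset.card = G.edgeSet.ncard := by
      rw [SimpleGraph.edgeFinset_card, ← Nat.card_eq_fintype_card, Nat.card_coe_set_eq]
    have hle : ∑ v, G.degree v ≤ 2 * Fintype.card V := by
      rw [hsum, hec]; omega
    have hge : ∑ v : V, 2 ≤ ∑ v, G.degree v := Finset.sum_le_sum fun v _ => hdeg2 v
    rw [Finset.sum_const, smul_eq_mul, Finset.card_univ, mul_comm] at hge
    have heq : ∑ v : V, (2 : ℕ) = ∑ v, G.degree v := by
      rw [Finset.sum_const, smul_eq_mul, Finset.card_univ]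
      omega
    have hall2 : ∀ v : V, G.degree v = 2 := by
      intro v
      have := (Finset.sum_eq_sum_iff_of_le (fun i _ => hdeg2 i)).1 heq v (Finset.mem_univ v)
      omega
    have hnbr : ∀ x y z : V, y ≠ z → G.Adj x y → G.Adj x z →
        ∀ t, G.Adj x t → t = y ∨ t = z := by
      intro x y z hyz hxy hxz t hxt
      have hsub : ({y, z} : Finset V) ⊆ G.neighborFinset x := by
        intro s hs
        rcases Finset.mem_insert.1 hs with rfl | hs
        · exact (SimpleGraph.mem_neighborFinset G x s).2 hxy
        · rw [Finset.mem_singleton] at hs; subst hs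
          exact (SimpleGraph.mem_neighborFinset G x s).2 hxz
      have hcard2 : (G.neighborFinset x).card ≤ ({y, z} : Finset V).card := by
        rw [Finset.card_insert_of_notMem (by simpa using hyz), Finset.card_singleton]
        exact le_of_eq (hall2 x)
      have := Finset.eq_of_subset_of_card_le hsub hcard2
      have ht : t ∈ ({y, z} : Finset V) := by
        rw [this]; exact (SimpleGraph.mem_neighborFinset G x t).2 hxt
      simpa using ht
    have step : ∀ y z : V, (y = a ∨ y = b ∨ y = c) → G.Adj y z →
        (z = a ∨ z = b ∨ z = c) := by
      rintro y z (rfl | rfl | rfl) hyz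
      · rcases hnbr y b c hbc.ne hab hac z hyz with h | h
        · exact Or.inr (Or.inl h)
        · exact Or.inr (Or.inr h)
      · rcases hnbr y a c hac.ne hab.symm hbc z hyz with h | h
        · exact Or.inl h
        · exact Or.inr (Or.inr h)
      · rcases hnbr y a b hab.ne hac.symm hbc.symm z hyz with h | h
        · exact Or.inl h
        · exact Or.inr (Or.inl h)
    intro x
    obtain ⟨p⟩ := hconn.preconnected a x
    have key : ∀ {y x : V} (p : G.Walk y x), (y = a ∨ y = b ∨ y = c) →
        (x = a ∨ x = b ∨ x = c) := by
      intro y x p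
      induction p with
      | nil => exact id
      | cons h q ih => intro hy; exact ih (step _ _ hy h)
    exact key p (Or.inl rfl)

lemma base_case [Fintype V] [DecidableEq V] (hconn : G.Connected)
    {a b c : V} (hab : G.Adj a b) (hbc : G.Adj b c) (hac : G.Adj a c)
    (hall : ∀ x : V, x = a ∨ x = b ∨ x = c)
    (hw : ∀ e ∈ G.edgeSet, 0 < w e)
    (x : V → ℝ) (hsum : ∑ i, x i = 0) (hx : x ≠ 0) :
    ∑ i, ∑ j, x i * x j * wdist G w i j < 0 := by
  classical
  have hab' := hab.ne
  have hbc' := hbc.ne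
  have hac' := hac.ne
  have huniv : (Finset.univ : Finset V) = {a, b, c} := by
    symm
    rw [Finset.eq_univ_iff_forall]
    intro t
    rcases hall t with rfl | rfl | rfl <;> simp
  have hsum3 : ∀ f : V → ℝ, ∑ i, f i = f a + f b + f c := by
    intro f
    rw [huniv, Finset.sum_insert (by simp [hab', hac']),
      Finset.sum_insert (by simp [hbc']), Finset.sum_singleton, add_assoc]
  set p := wdist G w a b with hp
  set q := wdist G w a c with hq
  set r := wdist G w b c with hr
  have hreach : ∀ s t : V, G.Reachable s t := hconn.preconnected
  have hppos : 0 < p := wdist_pos hw (hreach a b) hab'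
  have hqpos : 0 < q := wdist_pos hw (hreach a c) hac'
  have hrpos : 0 < r := wdist_pos hw (hreach b c) hbc'
  have htri1 : p ≤ q + r := by
    have := wdist_triangle hw (hreach a c) (hreach c b)
    rw [wdist_symm c b] at this
    exact this
  have htri2 : q ≤ p + r := wdist_triangle hw (hreach a b) (hreach b c)
  have htri3 : r ≤ p + q := by
    have := wdist_triangle hw (hreach b a) (hreach a c)
    rw [wdist_symm b a] at this
    linarith
  have hS : ∑ i, ∑ j, x i * x j * wdist G w i j
      = 2 * (p * (x a * x b) + q * (x a * x c) + r * (x b * x c)) := by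
    rw [hsum3 (fun i => ∑ j, x i * x j * wdist G w i j)]
    rw [hsum3 (fun j => x a * x j * wdist G w a j),
        hsum3 (fun j => x b * x j * wdist G w b j),
        hsum3 (fun j => x c * x j * wdist G w c j)]
    rw [wdist_self hw a, wdist_self hw b, wdist_self hw c,
        wdist_symm b a, wdist_symm c a, wdist_symm c b]
    ring
  rw [hS]
  have hxs : x a + x b + x c = 0 := by rw [← hsum3 x]; exact hsum
  have hxne : ¬(x a = 0 ∧ x b = 0) := by
    rintro ⟨h1, h2⟩
    apply hx
    funext i
    have h3 : x c = 0 := by linarith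
    rcases hall i with rfl | rfl | rfl <;> simpa
  set A := x a
  set B := x b
  have hxc : x c = -A - B := by linarith
  rw [hxc]
  have ht0 : 0 ≤ q + r - p := by linarith
  have hkey : (q + r - p) ^ 2 < 4 * q * r := by
    rcases eq_or_lt_of_le ht0 with h0 | h0
    · have h4 : (0:ℝ) < 4 * q * r := by positivity
      nlinarith
    · nlinarith [mul_nonneg (by linarith : (0:ℝ) ≤ 2 * q - (q + r - p))
        (by linarith : (0:ℝ) ≤ 2 * r - (q + r - p)), mul_pos h0 hppos]
  have hgoal : 0 < q * A ^ 2 + r * B ^ 2 + (q + r - p) * (A * B) := by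
    by_cases hB : B = 0
    · have hA : A ≠ 0 := by
        intro hA; exact hxne ⟨hA, hB⟩
      rw [hB]
      have : 0 < q * A ^ 2 := by positivity
      simpa using this
    · nlinarith [sq_nonneg (2 * q * A + (q + r - p) * B),
        mul_pos (by linarith : (0:ℝ) < 4 * q * r - (q + r - p) ^ 2)
          (by positivity : (0:ℝ) < B ^ 2), hqpos]
  nlinarith [hgoal]


theorem negQF : ∀ (N : ℕ), ∀ (V : Type) [Fintype V] [DecidableEq V],
    ∀ (G : SimpleGraph V) (w : Sym2 V → ℝ), Fintype.card V ≤ N →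
    G.Connected → G.edgeSet.ncard ≤ Fintype.card V →
    ∀ a b c : V, G.Adj a b → G.Adj b c → G.Adj a c →
    (∀ e ∈ G.edgeSet, 0 < w e) →
    ∀ x : V → ℝ, ∑ i, x i = 0 → x ≠ 0 →
    ∑ i, ∑ j, x i * x j * wdist G w i j < 0 := by
  intro N
  induction N with
  | zero =>
    intro V _ _ G w hN hconn hcard a b c _ _ _ _ _ _ _
    have : 0 < Fintype.card V := Fintype.card_pos_iff.2 ⟨a⟩
    omega
  | succ N ih =>
    intro V instF instD G w hN hconn hcard a b c hab hbc hac hw x hsum hx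
    rcases exists_leaf hconn hcard hab hbc hac with hall | ⟨v, u, hu, hleaf, hva, hvb, hvc⟩
    · exact base_case hconn hab hbc hac hall hw x hsum hx
    · -- leaf case
      classical
      set W := w s(u, v) with hWdef
      have hWpos : 0 < W := hw _ ((SimpleGraph.mem_edgeSet G).mpr hu)
      have huv : u ≠ v := hu.ne
      set t := x v with htdef
      set E := (Finset.univ : Finset V).erase v with hE
      have hmemE : ∀ i : V, i ∈ E ↔ i ≠ v := by
        intro i; rw [hE, Finset.mem_erase]; simp
      have huE : u ∈ E := (hmemE u).2 huv
      set d := wdist G w with hd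
      have hdsymm : ∀ i j : V, d i j = d j i := fun i j => wdist_symm i j
      -- helper for ite sums
      have sum_ite_u : ∀ (f : V → ℝ) (s : ℝ), ∑ j ∈ E, (if j = u then s else 0) * f j = s * f u := by
        intro f s
        rw [Finset.sum_congr rfl (fun j _ => by rw [ite_mul, zero_mul])]
        rw [Finset.sum_ite_eq' E u fun j => s * f j, if_pos huE]
      -- sum over E of x = -t
      have hEsum : ∑ i ∈ E, x i = -t := by
        have h0 := Finset.sum_erase_add Finset.univ x (Finset.mem_univ v)
        rw [← hE, ← htdef] at h0
        rw [hsum] at h0; linarith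
      -- pendant formulas
      have hpend : ∀ i ∈ E, d v i = W + d u i := by
        intro i hi
        exact wdist_pendant hw hu hleaf hconn ((hmemE i).1 hi)
      have hpend' : ∀ i ∈ E, d i v = W + d u i := by
        intro i hi
        rw [hdsymm i v]
        exact hpend i hi
      have hvv : d v v = 0 := wdist_self hw v
      have huu : d u u = 0 := wdist_self hw u
      set A := ∑ i ∈ E, ∑ j ∈ E, x i * x j * d i j with hA
      set B := ∑ i ∈ E, x i * d u i with hB
      -- split S
      have hsplit : ∑ i, ∑ j, x i * x j * d i j = A + 2 * t * B - 2 * W * t ^ 2 := by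
        rw [← Finset.sum_erase_add Finset.univ _ (Finset.mem_univ v), ← hE]
        have hin : ∀ i : V, ∑ j, x i * x j * d i j
            = (∑ j ∈ E, x i * x j * d i j) + x i * t * d i v := by
          intro i
          rw [← Finset.sum_erase_add Finset.univ _ (Finset.mem_univ v), ← hE, ← htdef]
        rw [Finset.sum_congr rfl (fun i _ => hin i), hin v, Finset.sum_add_distrib]
        have hcol : ∑ i ∈ E, x i * t * d i v = t * (W * (-t) + B) := by
          calc ∑ i ∈ E, x i * t * d i v = ∑ i ∈ E, (t * W * x i + t * (x i * d u i)) :=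
                Finset.sum_congr rfl (fun i hi => by rw [hpend' i hi]; ring)
            _ = t * W * (∑ i ∈ E, x i) + t * B := by
                rw [Finset.sum_add_distrib, ← Finset.mul_sum, ← Finset.mul_sum, hB]
            _ = t * (W * (-t) + B) := by rw [hEsum]; ring
        have hrow : ∑ j ∈ E, x v * x j * d v j = t * (W * (-t) + B) := by
          calc ∑ j ∈ E, x v * x j * d v j = ∑ j ∈ E, (t * W * x j + t * (x j * d u j)) :=
                Finset.sum_congr rfl (fun j hj => by rw [hpend j hj, ← htdef]; ring)
            _ = t * W * (∑ j ∈ E, x j) + t * B := by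
                rw [Finset.sum_add_distrib, ← Finset.mul_sum, ← Finset.mul_sum, hB]
            _ = t * (W * (-t) + B) := by rw [hEsum]; ring
        rw [hcol, hrow, hvv, ← htdef]
        ring
      -- the reduced vector on the subtype
      set g : V → ℝ := fun i => x i + (if i = u then t else 0) with hg
      set y : {z : V // z ≠ v} → ℝ := fun j => g j.1 with hy
      have hconv : ∀ f : V → ℝ, ∑ j : {z : V // z ≠ v}, f j.1 = ∑ j ∈ E, f j := by
        intro f
        exact (Finset.sum_subtype E (fun z => hmemE z) f).symm
      set d' := wdist (Gdel G v) (wdel w v) with hd'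
      have hd'eq : ∀ i j : {z : V // z ≠ v}, d' i j = d i.1 j.1 := by
        intro i j
        exact wdist_del_eq hw hu hleaf hconn i j
      have hgE : ∀ i ∈ E, g i * (∑ j ∈ E, g j * d i j)
          = g i * ((∑ j ∈ E, x j * d i j) + t * d i u) := by
        intro i _
        congr 1
        have : ∑ j ∈ E, g j * d i j
            = ∑ j ∈ E, (x j * d i j + (if j = u then t else 0) * d i j) := by
          refine Finset.sum_congr rfl (fun j _ => ?_)
          rw [hg]; ring
        rw [this, Finset.sum_add_distrib, sum_ite_u (fun j => d i j) t]
      have hS' : ∑ i : {z : V // z ≠ v}, ∑ j : {z : V // z ≠ v}, y i * y j * d' i j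
          = A + 2 * t * B := by
        have step1 : ∀ i : {z : V // z ≠ v},
            ∑ j : {z : V // z ≠ v}, y i * y j * d' i j
            = g i.1 * (∑ j ∈ E, g j * d i.1 j) := by
          intro i
          have : ∀ j : {z : V // z ≠ v}, y i * y j * d' i j = g i.1 * (g j.1 * d i.1 j.1) := by
            intro j
            rw [hd'eq i j, hy]
            ring
          rw [Finset.sum_congr rfl (fun j _ => this j), ← Finset.mul_sum,
            hconv (fun j => g j * d i.1 j)]
        rw [Finset.sum_congr rfl (fun i _ => step1 i)]
        rw [hconv (fun i => g i * ∑ j ∈ E, g j * d i j)]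
        rw [Finset.sum_congr rfl hgE]
        have expand : ∀ i ∈ E, g i * ((∑ j ∈ E, x j * d i j) + t * d i u)
            = x i * (∑ j ∈ E, x j * d i j) + x i * t * d i u
              + (if i = u then t else 0) * ((∑ j ∈ E, x j * d i j) + t * d i u) := by
          intro i _
          rw [hg]; ring
        rw [Finset.sum_congr rfl expand, Finset.sum_add_distrib, Finset.sum_add_distrib]
        rw [sum_ite_u (fun i => (∑ j ∈ E, x j * d i j) + t * d i u) t]
        have e1 : ∑ i ∈ E, x i * (∑ j ∈ E, x j * d i j) = A := by
          rw [hA]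
          refine Finset.sum_congr rfl (fun i _ => ?_)
          rw [Finset.mul_sum]
          exact Finset.sum_congr rfl (fun j _ => by ring)
        have e2 : ∑ i ∈ E, x i * t * d i u = t * B := by
          rw [hB, Finset.mul_sum]
          exact Finset.sum_congr rfl (fun i _ => by rw [hdsymm i u]; ring)
        have e3 : (∑ j ∈ E, x j * d u j) + t * d u u = B := by
          rw [huu, hB]
          simp
        rw [e1, e2, e3]
        ring
      -- apply IH or conclude directly
      by_cases hy0 : y = 0
      · -- then x is supported on {u, v} with opposite values
        have ht0 : t ≠ 0 := by
          intro ht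
          apply hx
          funext i
          by_cases hiv : i = v
          · rw [hiv, ← htdef, ht]; rfl
          · have := congrFun hy0 ⟨i, hiv⟩
            simp only [hy, hg, Pi.zero_apply] at this
            rw [ht] at this
            simp only [ite_self, add_zero] at this
            simpa using this
        have hS'0 : ∑ i : {z : V // z ≠ v}, ∑ j : {z : V // z ≠ v}, y i * y j * d' i j = 0 := by
          rw [hy0]; simp
        rw [hsplit, ← hS', hS'0]
        have : 0 < W * t ^ 2 := by positivity
        linarith
      · have hysum : ∑ j : {z : V // z ≠ v}, y j = 0 := by
          rw [hy]
          rw [hconv g]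
          have : ∑ j ∈ E, g j = (∑ j ∈ E, x j) + ∑ j ∈ E, (if j = u then t else 0) :=
            Finset.sum_add_distrib
          rw [this, hEsum, Finset.sum_ite_eq' E u fun _ => t, if_pos huE]
          try ring
        have hcV : Fintype.card {z : V // z ≠ v} = Fintype.card V - 1 := by
          have h1 : Fintype.card {z : V // z = v} = 1 := Fintype.card_subtype_eq v
          rw [← h1]
          exact Fintype.card_subtype_compl _
        have hposV : 0 < Fintype.card V := Fintype.card_pos_iff.2 ⟨a⟩
        have hcle : Fintype.card {z : V // z ≠ v} ≤ N := by omega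
        have hcard' : (Gdel G v).edgeSet.ncard ≤ Fintype.card {z : V // z ≠ v} := by
          have := edge_count_del hu hleaf
          omega
        have hIH := ih {z : V // z ≠ v} (Gdel G v) (wdel w v) hcle
          (connected_del hw hu hleaf hconn) hcard'
          ⟨a, Ne.symm hva⟩ ⟨b, Ne.symm hvb⟩ ⟨c, Ne.symm hvc⟩
          hab hbc hac (hw_del hw) y hysum hy0
        rw [hsplit, ← hS']
        rw [← hd'] at hIH
        have : 0 < W * t ^ 2 ∨ W * t ^ 2 = 0 := by
          rcases eq_or_ne t 0 with h | h
          · right; rw [h]; ring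
          · left; positivity
        rcases this with h | h
        · nlinarith
        · nlinarith

end AuxUni

open AuxUni in
theorem unicyclic_triangle_inertia (n : ℕ) (G : SimpleGraph (Fin n))
    (hconn : G.Connected) (huni : Nat.card G.edgeSet = n)
    (a b c : Fin n) (hab : G.Adj a b) (hbc : G.Adj b c) (hac : G.Adj a c)
    (w : Sym2 (Fin n) → ℝ) (hw : ∀ e ∈ G.edgeSet, 0 < w e)
    (hD : (distMatrix G w).IsHermitian) :
    posEig hD = 1 ∧ zeroEig hD = 0 ∧ negEig hD = n - 1 := by
  classical
  set A := distMatrix G w with hA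
  set eig := hD.eigenvalues with heig
  set U : Matrix (Fin n) (Fin n) ℝ := (hD.eigenvectorUnitary : Matrix (Fin n) (Fin n) ℝ)
    with hU
  have hU1 : star U * U = 1 := Matrix.mem_unitaryGroup_iff'.mp hD.eigenvectorUnitary.2
  have hU2 : U * star U = 1 := Matrix.mem_unitaryGroup_iff.mp hD.eigenvectorUnitary.2
  have hAU : A * U = U * Matrix.diagonal eig := by
    have hspec := hD.spectral_theorem
    have : (Matrix.diagonal (RCLike.ofReal ∘ eig) : Matrix (Fin n) (Fin n) ℝ)
        = Matrix.diagonal eig := by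
      congr 1
    calc A * U = (U * Matrix.diagonal eig * star U) * U := by
            rw [← this, hspec, Unitary.conjStarAlgAut_apply]
      _ = U * Matrix.diagonal eig * (star U * U) := by rw [mul_assoc]
      _ = U * Matrix.diagonal eig := by rw [hU1, mul_one]
  -- the quadratic form in terms of sums
  have hQF : ∀ x : Fin n → ℝ, ∑ i, ∑ j, x i * x j * wdist G w i j
      = x ⬝ᵥ (A *ᵥ x) := by
    intro x
    simp only [dotProduct, Matrix.mulVec, Finset.mul_sum]
    refine Finset.sum_congr rfl fun i _ => Finset.sum_congr rfl fun j _ => ?_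
    show x i * x j * wdist G w i j = x i * (A i j * x j)
    rw [hA]
    show x i * x j * wdist G w i j = x i * (wdist G w i j * x j)
    ring
  -- expansion in eigencoordinates
  have hsT : Uᵀ * U = 1 := by
    have : Uᵀ = star U := by
      ext i j
      simp [Matrix.star_apply]
    rw [this]; exact hU1
  have hexp : ∀ z : Fin n → ℝ, (U *ᵥ z) ⬝ᵥ (A *ᵥ (U *ᵥ z)) = ∑ i, eig i * z i ^ 2 := by
    intro z
    rw [Matrix.mulVec_mulVec, hAU, ← Matrix.mulVec_mulVec]
    rw [Matrix.dotProduct_mulVec, Matrix.vecMul_mulVec, hsT, Matrix.vecMul_one]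
    simp only [dotProduct, Matrix.mulVec_diagonal]
    exact Finset.sum_congr rfl fun i _ => by ring
  have hUinj : ∀ z : Fin n → ℝ, U *ᵥ z = 0 → z = 0 := by
    intro z hz
    have : (star U * U) *ᵥ z = star U *ᵥ (U *ᵥ z) := (Matrix.mulVec_mulVec _ _ _).symm
    rw [hU1, Matrix.one_mulVec, hz, Matrix.mulVec_zero] at this
    exact this
  -- the negativity property
  have hcard : G.edgeSet.ncard ≤ Fintype.card (Fin n) := by
    have h1 : G.edgeSet.ncard = n := by rw [← Nat.card_coe_set_eq, huni]
    rw [Fintype.card_fin]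
    omega
  have hneg : ∀ x : Fin n → ℝ, ∑ i, x i = 0 → x ≠ 0 → x ⬝ᵥ (A *ᵥ x) < 0 := by
    intro x h1 h2
    rw [← hQF x]
    exact negQF n (Fin n) G w (le_of_eq (Fintype.card_fin n)) hconn hcard
      a b c hab hbc hac hw x h1 h2
  -- Claim 1: at most one nonnegative eigenvalue
  have claim1 : ∀ i j : Fin n, 0 ≤ eig i → 0 ≤ eig j → i = j := by
    intro i j hi hj
    by_contra hij
    set si := ∑ k, U k i with hsi
    set sj := ∑ k, U k j with hsj
    obtain ⟨α, β, hαβ, hzero⟩ : ∃ α β : ℝ, ¬(α = 0 ∧ β = 0) ∧ α * si + β * sj = 0 := by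
      by_cases h : si = 0
      · exact ⟨1, 0, by simp, by rw [h]; ring⟩
      · exact ⟨sj, -si, fun ⟨_, h2⟩ => h (by linarith [h2]), by ring⟩
    set z : Fin n → ℝ := α • (Pi.single i (1:ℝ) : Fin n → ℝ) + β • (Pi.single j (1:ℝ) : Fin n → ℝ) with hz
    have hzi : z i = α := by simp [hz, Pi.single_apply, hij, Ne.symm hij]
    have hzj : z j = β := by simp [hz, Pi.single_apply, hij, Ne.symm hij]
    have hzk : ∀ k, k ≠ i → k ≠ j → z k = 0 := by
      intro k h1 h2
      simp [hz, Pi.single_apply, h1, h2]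
    have hzne : z ≠ 0 := by
      intro h0
      exact hαβ ⟨by rw [← hzi, h0]; rfl, by rw [← hzj, h0]; rfl⟩
    have hxne : U *ᵥ z ≠ 0 := fun h => hzne (hUinj z h)
    have hxform : U *ᵥ z = fun k => α * U k i + β * U k j := by
      funext k
      rw [hz, Matrix.mulVec_add, Matrix.mulVec_smul, Matrix.mulVec_smul]
      simp [Matrix.mulVec_single]
    have hxsum : ∑ k, (U *ᵥ z) k = 0 := by
      rw [hxform]
      rw [Finset.sum_add_distrib, ← Finset.mul_sum, ← Finset.mul_sum, ← hsi, ← hsj]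
      exact hzero
    have hlt := hneg (U *ᵥ z) hxsum hxne
    rw [hexp z] at hlt
    have hsumval : ∑ k, eig k * z k ^ 2 = eig i * α ^ 2 + eig j * β ^ 2 := by
      rw [← Finset.sum_subset (Finset.subset_univ ({i, j} : Finset (Fin n)))
        (fun k _ hk => by
          rw [Finset.mem_insert, Finset.mem_singleton] at hk
          push_neg at hk
          rw [hzk k hk.1 hk.2]
          ring)]
      rw [Finset.sum_insert (by simpa using hij), Finset.sum_singleton, hzi, hzj]
    rw [hsumval] at hlt
    nlinarith [mul_nonneg hi (sq_nonneg α), mul_nonneg hj (sq_nonneg β)]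
  -- Claim 2: some eigenvalue is positive
  have claim2 : ∃ i, 0 < eig i := by
    by_contra hc
    push_neg at hc
    have hones : (0:ℝ) < (fun _ => (1:ℝ)) ⬝ᵥ (A *ᵥ fun _ => (1:ℝ)) := by
      rw [← hQF fun _ => 1]
      have hterm : ∀ i j : Fin n, (0:ℝ) ≤ 1 * 1 * wdist G w i j := by
        intro i j
        have := wdist_nonneg hw (hconn.preconnected i j)
        linarith
      refine Finset.sum_pos' (fun i _ => Finset.sum_nonneg fun j _ => hterm i j) ⟨a, Finset.mem_univ a, ?_⟩
      refine Finset.sum_pos' (fun j _ => hterm a j) ⟨b, Finset.mem_univ b, ?_⟩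
      have := wdist_pos hw (hconn.preconnected a b) hab.ne
      linarith
    have hsurj : (fun _ => (1:ℝ)) = U *ᵥ (star U *ᵥ fun _ => (1:ℝ)) := by
      rw [Matrix.mulVec_mulVec, hU2, Matrix.one_mulVec]
    rw [hsurj, hexp] at hones
    have : ∑ i, eig i * (star U *ᵥ fun _ => (1:ℝ)) i ^ 2 ≤ 0 :=
      Finset.sum_nonpos fun i _ => mul_nonpos_of_nonpos_of_nonneg (hc i) (sq_nonneg _)
    linarith
  -- counting
  obtain ⟨i₀, hi₀⟩ := claim2
  have hchar : ∀ j : Fin n, 0 ≤ eig j ↔ j = i₀ := by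
    intro j
    constructor
    · intro hj; exact claim1 j i₀ hj hi₀.le
    · rintro rfl; exact hi₀.le
  refine ⟨?_, ?_, ?_⟩
  · show Nat.card {i : Fin n // 0 < eig i} = 1
    have he : ∀ j : Fin n, 0 < eig j ↔ j = i₀ := by
      intro j
      constructor
      · intro hj; exact (hchar j).1 hj.le
      · rintro rfl; exact hi₀
    rw [Nat.card_congr (Equiv.subtypeEquivRight he), Nat.card_eq_fintype_card,
      Fintype.card_subtype_eq]
  · show Nat.card {i : Fin n // eig i = 0} = 0
    have : IsEmpty {i : Fin n // eig i = 0} := by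
      refine ⟨fun ⟨j, hj⟩ => ?_⟩
      have := (hchar j).1 (le_of_eq hj.symm)
      rw [this] at hj
      exact absurd hj (ne_of_gt hi₀)
    exact Nat.card_of_isEmpty
  · show Nat.card {i : Fin n // eig i < 0} = n - 1
    have he : ∀ j : Fin n, eig j < 0 ↔ ¬(j = i₀) := by
      intro j
      constructor
      · intro hj h; rw [h] at hj; exact absurd hj (asymm hi₀)
      · intro hj
        by_contra h
        push_neg at h
        exact hj ((hchar j).1 h)
    rw [Nat.card_congr (Equiv.subtypeEquivRight he), Nat.card_eq_fintype_card,
      Fintype.card_subtype_compl, Fintype.card_subtype_eq, Fintype.card_fin]
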